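/- Let H be a countable group with FC-center H^{fc}. The conjugation action of H on the group von Neumann algebra L(H^{fc}) is weakly compact relative to H^{fc} with respect to the canonical trace: there exists a sequence of unit vectors η_n ∈ ℓ²(H^{fc}) ⊗ ℓ²(H^{fc}) of the form η_n = |E_n|^{-1/2} Σ_{a ∈ E_n} δ_a ⊗ δ_a, for finite subsets E_n ⊆ H^{fc}, such that: (i) |g E_n g^{-1} △ E_n| / |E_n| → 0 for all g ∈ H, and (ii) |h E_n △ E_n| / |E_n| → 0 for all h ∈ H^{fc}. -/

import Mathlib

open Filter Set Pointwise

namespace Stmt11Aux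

variable {H : Type*} [Group H]

/-- The FC predicate: elements with finite conjugacy class. -/
def FCset (H : Type*) [Group H] : Set H := {h : H | (Set.range fun g : H => g * h * g⁻¹).Finite}


lemma fc_one : (1 : H) ∈ FCset H := by
  have : (Set.range fun g : H => g * 1 * g⁻¹) ⊆ {1} := by
    rintro x ⟨g, rfl⟩; simp
  exact Set.Finite.subset (Set.finite_singleton 1) this

lemma fc_mul {a b : H} (ha : a ∈ FCset H) (hb : b ∈ FCset H) : a * b ∈ FCset H := by
  have : (Set.range fun g : H => g * (a * b) * g⁻¹) ⊆
      Set.image2 (· * ·) (Set.range fun g : H => g * a * g⁻¹)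
        (Set.range fun g : H => g * b * g⁻¹) := by
    rintro x ⟨g, rfl⟩
    exact ⟨g * a * g⁻¹, ⟨g, rfl⟩, g * b * g⁻¹, ⟨g, rfl⟩, by group⟩
  exact Set.Finite.subset (Set.Finite.image2 _ ha hb) this

lemma fc_inv {a : H} (ha : a ∈ FCset H) : a⁻¹ ∈ FCset H := by
  have : (Set.range fun g : H => g * a⁻¹ * g⁻¹) ⊆
      (fun x => x⁻¹) '' (Set.range fun g : H => g * a * g⁻¹) := by
    rintro x ⟨g, rfl⟩
    exact ⟨g * a * g⁻¹, ⟨g, rfl⟩, by group⟩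
  exact Set.Finite.subset (Set.Finite.image _ ha) this

lemma fc_conj {a : H} (k : H) (ha : a ∈ FCset H) : k * a * k⁻¹ ∈ FCset H := by
  have : (Set.range fun g : H => g * (k * a * k⁻¹) * g⁻¹) ⊆
      (Set.range fun g : H => g * a * g⁻¹) := by
    rintro x ⟨g, rfl⟩
    exact ⟨g * k, by group⟩
  exact Set.Finite.subset ha this



lemma one_mem_pow {S : Set H} (h1 : 1 ∈ S) (N : ℕ) : (1 : H) ∈ S ^ N := by
  induction N with
  | zero => simp
  | succ n ih => rw [pow_succ]; exact ⟨1, ih, 1, h1, mul_one 1⟩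

lemma pow_finite {S : Set H} (hS : S.Finite) (N : ℕ) : (S ^ N).Finite := by
  induction N with
  | zero => simp
  | succ n ih => rw [pow_succ]; exact Set.Finite.mul ih hS

lemma pow_subset_closure {S : Set H} (N : ℕ) :
    S ^ N ⊆ (Subgroup.closure S : Set H) := by
  induction N with
  | zero =>
      simp only [pow_zero]
      rintro x hx
      rw [Set.mem_one] at hx
      subst hx; exact (Subgroup.closure S).one_mem
  | succ n ih =>
      rw [pow_succ]
      rintro x ⟨a, ha, b, hb, rfl⟩
      exact (Subgroup.closure S).mul_mem (ih ha) (Subgroup.subset_closure hb)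

lemma pow_subset_subgroup {C : Subgroup H} {U : Set H} (hU : U ⊆ (C : Set H)) (N : ℕ) :
    U ^ N ⊆ (C : Set H) := by
  induction N with
  | zero =>
      rintro x hx
      rw [pow_zero, Set.mem_one] at hx
      subst hx; exact C.one_mem
  | succ n ih =>
      rw [pow_succ]
      rintro x ⟨a, ha, b, hb, rfl⟩
      exact C.mul_mem (ih ha) (hU hb)

lemma noncommProd_eq_one : ∀ (s : Finset H) (f : H → H) (comm : (↑s : Set H).Pairwise fun a b => Commute (f a) (f b)), (∀ x ∈ s, f x = 1) → s.noncommProd f comm = 1 := by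
  intro s f
  induction s using Finset.cons_induction with
  | empty => intro comm h; simp
  | cons a s ha ih =>
      intro comm h
      rw [Finset.noncommProd_cons, h a (Finset.mem_cons_self a s), one_mul]
      exact ih _ (fun x hx => h x (Finset.mem_cons.2 (Or.inr hx)))

/-- counting products over a finite commuting set -/
lemma abelian_pow_ncard_le (U : Set H) (hU : U.Finite)
    (hcomm : ∀ u ∈ U, ∀ v ∈ U, Commute u v) (N : ℕ) :
    (U ^ N).ncard ≤ (N + 1) ^ U.ncard := by
  classical
  set Uf : Finset H := hU.toFinset with hUf
  have hmemUf : ∀ x, x ∈ Uf ↔ x ∈ U := fun x => hU.mem_toFinset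
  have commF : ∀ k : H → ℕ, ((Uf : Set H).Pairwise fun a b => Commute (a ^ k a) (b ^ k b)) := by
    intro k a ha b hb _
    exact Commute.pow_pow (hcomm a ((hmemUf a).1 ha) b ((hmemUf b).1 hb)) _ _
  set F : (H → ℕ) → H := fun k => Uf.noncommProd (fun u => u ^ k u) (commF k) with hF
  -- main claim
  have main : ∀ N, ∀ x ∈ U ^ N, ∃ k : H → ℕ,
      (∀ v, k v ≤ N) ∧ (∀ v, v ∉ U → k v = 0) ∧ F k = x := by
    intro N
    induction N with
    | zero =>
        intro x hx
        rw [pow_zero, Set.mem_one] at hx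
        subst hx
        refine ⟨fun _ => 0, fun _ => le_rfl, fun _ _ => rfl, ?_⟩
        exact noncommProd_eq_one Uf _ _ (fun x _ => pow_zero x)
    | succ n ih =>
        intro x hx
        rw [pow_succ'] at hx
        obtain ⟨u, hu, y, hy, rfl⟩ := hx
        obtain ⟨k, hk1, hk2, hk3⟩ := ih y hy
        refine ⟨fun v => if v = u then k v + 1 else k v, ?_, ?_, ?_⟩
        · intro v
          by_cases h : v = u
          · simp only [h, if_pos rfl]
            exact Nat.succ_le_succ (hk1 u)
          · simp only [if_neg h]
            exact (hk1 v).trans (Nat.le_succ n)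
        · intro v hv
          have : v ≠ u := fun h => hv (h ▸ hu)
          simp [this, hk2 v hv]
        · have huUf : u ∈ Uf := (hmemUf u).2 hu
          set k' : H → ℕ := fun v => if v = u then k v + 1 else k v with hk'
          have e1 : F k = u ^ k u * (Uf.erase u).noncommProd (fun v => v ^ k v)
              (fun a ha b hb hab => commF k (Finset.mem_of_mem_erase ha)
                (Finset.mem_of_mem_erase hb) hab) := by
            rw [hF]
            exact (Finset.mul_noncommProd_erase Uf huUf (fun v => v ^ k v) (commF k)).symm
          have e2 : F k' = u ^ (k u + 1) * (Uf.erase u).noncommProd (fun v => v ^ k v)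
              (fun a ha b hb hab => commF k (Finset.mem_of_mem_erase ha)
                (Finset.mem_of_mem_erase hb) hab) := by
            show Uf.noncommProd (fun v => v ^ k' v) (commF k') = _
            rw [← Finset.mul_noncommProd_erase Uf huUf (fun v => v ^ k' v) (commF k')]
            have ek : k' u = k u + 1 := by simp [hk']
            rw [ek]
            congr 1
            apply Finset.noncommProd_congr rfl
            intro v hv
            have : v ≠ u := Finset.ne_of_mem_erase hv
            simp [hk', this]
          rw [← hk3, e1, e2, pow_succ', mul_assoc]
  -- counting
  set A : Set (H → ℕ) := {k | (∀ v, k v ≤ N) ∧ ∀ v, v ∉ U → k v = 0} with hA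
  have hsub : U ^ N ⊆ F '' A := by
    intro x hx
    obtain ⟨k, h1, h2, h3⟩ := main N x hx
    exact ⟨k, ⟨h1, h2⟩, h3⟩
  -- inject A into (Uf → Fin (N+1))
  set G : (H → ℕ) → (Uf → Fin (N + 1)) := fun k u => ⟨min (k u) N, Nat.lt_succ_of_le (min_le_right _ _)⟩ with hG
  have hinj : Set.InjOn G A := by
    intro k1 hk1 k2 hk2 h
    funext v
    by_cases hv : v ∈ U
    · have hvf : v ∈ Uf := (hmemUf v).2 hv
      have := congrFun h ⟨v, hvf⟩
      have e1 : min (k1 v) N = k1 v := min_eq_left (hk1.1 v)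
      have e2 : min (k2 v) N = k2 v := min_eq_left (hk2.1 v)
      simpa [hG, e1, e2, Fin.mk.injEq] using this
    · rw [hk1.2 v hv, hk2.2 v hv]
  have hAfin : A.Finite := by
    have : Finite ↥A := Finite.of_injective (A.restrict G) hinj.injective
    exact Set.finite_coe_iff.mp this
  have hcardA : A.ncard ≤ (N + 1) ^ U.ncard := by
    have h1 : A.ncard = (G '' A).ncard := (Set.ncard_image_of_injOn hinj).symm
    have h2 : (G '' A).ncard ≤ Nat.card (Uf → Fin (N + 1)) := by
      rw [← Nat.card_coe_set_eq]
      exact Nat.card_le_card_of_injective (fun x => (x : Uf → Fin (N+1))) Subtype.val_injective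
    have h3 : Nat.card (Uf → Fin (N + 1)) = (N + 1) ^ U.ncard := by
      rw [Nat.card_eq_fintype_card, Fintype.card_fun, Fintype.card_fin, Fintype.card_coe]
      rw [Set.ncard_eq_toFinset_card U hU]
    omega
  calc (U ^ N).ncard ≤ (F '' A).ncard := Set.ncard_le_ncard hsub (hAfin.image F)
    _ ≤ A.ncard := Set.ncard_image_le hAfin
    _ ≤ (N + 1) ^ U.ncard := hcardA



lemma exists_good_index (b : ℕ → ℕ) (hmono : Monotone b) (hpos : ∀ n, 1 ≤ b n)
    (c D : ℕ) (hgrow : ∀ n, b n ≤ c * (n + 1) ^ D) {ε : ℝ} (hε : 0 < ε) :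
    ∃ N, 1 ≤ N ∧ (b (N + 1) : ℝ) ≤ (1 + ε) * (b (N - 1) : ℝ) := by
  by_contra hcon
  push_neg at hcon
  have hstep : ∀ k : ℕ, (1 + ε) * (b (2 * k) : ℝ) < b (2 * k + 2) := by
    intro k
    have := hcon (2 * k + 1) (by omega)
    simpa using this
  have hgeo : ∀ k : ℕ, (1 + ε) ^ k ≤ (b (2 * k) : ℝ) := by
    intro k
    induction k with
    | zero => simpa using ((Nat.one_le_cast (α := ℝ)).2 (hpos 0))
    | succ m ih =>
        have h1 : (1 + ε) ^ (m + 1) = (1 + ε) * (1 + ε) ^ m := by ring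
        have h2 : (1 + ε) * (1 + ε) ^ m ≤ (1 + ε) * (b (2 * m) : ℝ) := by
          apply mul_le_mul_of_nonneg_left ih (by linarith)
        have h3 : (1 + ε) * (b (2 * m) : ℝ) < b (2 * m + 2) := hstep m
        have : 2 * (m + 1) = 2 * m + 2 := by ring
        rw [h1, this]
        linarith
  -- polynomial upper bound beats geometric: contradiction
  have hr : (1 : ℝ) < 1 + ε := by linarith
  have htend := tendsto_pow_const_div_const_pow_of_one_lt D hr
  have hδ : (0 : ℝ) < 1 / ((c : ℝ) * 3 ^ D + 1) := by positivity
  have hev : ∀ᶠ k : ℕ in atTop, (k : ℝ) ^ D / (1 + ε) ^ k < 1 / ((c : ℝ) * 3 ^ D + 1) :=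
    htend.eventually (gt_mem_nhds hδ)
  obtain ⟨k, hk1, hk2⟩ := (hev.and (eventually_ge_atTop 1)).exists
  -- now derive contradiction
  have hrk : (0 : ℝ) < (1 + ε) ^ k := by positivity
  have hkD : ((k : ℝ)) ^ D < (1 / ((c : ℝ) * 3 ^ D + 1)) * (1 + ε) ^ k := by
    rw [div_lt_iff₀ hrk] at hk1
    exact hk1
  have hb1 : (b (2 * k) : ℝ) ≤ (c : ℝ) * (2 * k + 1) ^ D := by
    have := hgrow (2 * k)
    calc (b (2 * k) : ℝ) ≤ ((c * (2 * k + 1) ^ D : ℕ) : ℝ) := Nat.cast_le.2 this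
      _ = (c : ℝ) * ((2 * k + 1 : ℕ) : ℝ) ^ D := by push_cast; ring
      _ = (c : ℝ) * (2 * (k : ℝ) + 1) ^ D := by push_cast; ring
  have hpoly : (2 * (k : ℝ) + 1) ^ D ≤ (3 : ℝ) ^ D * (k : ℝ) ^ D := by
    rw [← mul_pow]
    apply pow_le_pow_left₀ (by positivity)
    have : (1 : ℝ) ≤ (k : ℝ) := by exact_mod_cast hk2
    linarith
  have hchain : (1 + ε) ^ k ≤ (c : ℝ) * 3 ^ D * ((k : ℝ) ^ D) := by
    calc (1 + ε) ^ k ≤ (b (2 * k) : ℝ) := hgeo k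
      _ ≤ (c : ℝ) * (2 * (k : ℝ) + 1) ^ D := hb1
      _ ≤ (c : ℝ) * ((3 : ℝ) ^ D * (k : ℝ) ^ D) := by
          apply mul_le_mul_of_nonneg_left hpoly (by positivity)
      _ = (c : ℝ) * 3 ^ D * ((k : ℝ) ^ D) := by ring
  have hfin : (1 + ε) ^ k < ((c : ℝ) * 3 ^ D) * ((1 / ((c : ℝ) * 3 ^ D + 1)) * (1 + ε) ^ k) := by
    calc (1 + ε) ^ k ≤ (c : ℝ) * 3 ^ D * ((k : ℝ) ^ D) := hchain
      _ < ((c : ℝ) * 3 ^ D) * ((1 / ((c : ℝ) * 3 ^ D + 1)) * (1 + ε) ^ k) := by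
          apply mul_lt_mul_of_pos_left hkD
          -- need 0 < c * 3^D : c ≥ 1 since b 0 ≥ 1 ≤ c * 1^D
          have hc : 1 ≤ c := by
            have h1 := hgrow 0
            have h2 := hpos 0
            simp only [zero_add, one_pow, mul_one] at h1
            omega
          have : (1 : ℝ) ≤ (c : ℝ) := by exact_mod_cast hc
          positivity
  have hfrac : ((c : ℝ) * 3 ^ D) * (1 / ((c : ℝ) * 3 ^ D + 1)) < 1 := by
    rw [mul_one_div, div_lt_one (by positivity)]
    linarith
  nlinarith [hrk, hfin, hfrac]

/-- polynomial growth of powers of a finite FC set -/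
lemma poly_growth (S : Set H) (hfin : S.Finite) (hfc : S ⊆ FCset H) :
    ∃ c D : ℕ, 1 ≤ c ∧ ∀ N : ℕ, (S ^ N).ncard ≤ c * (N + 1) ^ D := by
  classical
  set C : Subgroup H := Subgroup.centralizer S with hC
  -- finiteness of the quotient H ⧸ C
  haveI hSsub : Finite ↥S := hfin.to_subtype
  haveI hfib : ∀ s : ↥S, Finite ↥(Set.range fun g : H => g * (s : H) * g⁻¹) := by
    intro s
    exact (hfc s.2).to_subtype
  set T := ∀ s : ↥S, ↥(Set.range fun g : H => g * (s : H) * g⁻¹) with hT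
  haveI : Finite T := by infer_instance
  set φ : H → T := fun g s => ⟨g * s * g⁻¹, ⟨g, rfl⟩⟩ with hφ
  have hφconst : ∀ a b : H, a⁻¹ * b ∈ C → φ a = φ b := by
    intro a b hab
    funext s
    apply Subtype.ext
    show a * s * a⁻¹ = b * s * b⁻¹
    have hcs : (s : H) * (a⁻¹ * b) = (a⁻¹ * b) * s :=
      Subgroup.mem_centralizer_iff.1 hab (s : H) s.2
    have : b * (s : H) * b⁻¹ = a * s * a⁻¹ := by
      calc b * (s : H) * b⁻¹ = a * ((a⁻¹ * b) * s * (a⁻¹ * b)⁻¹) * a⁻¹ := by group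
        _ = a * ((s : H) * (a⁻¹ * b) * (a⁻¹ * b)⁻¹) * a⁻¹ := by rw [hcs]
        _ = a * s * a⁻¹ := by group
    exact this.symm
  set ψ : H ⧸ C → T := fun q => Quotient.liftOn' q φ (by
    intro a b hab
    exact hφconst a b (QuotientGroup.leftRel_apply.1 hab)) with hψ
  have hψinj : Function.Injective ψ := by
    intro q1 q2 h
    induction q1 using Quotient.inductionOn'
    induction q2 using Quotient.inductionOn'
    rename_i a b
    have hab : φ a = φ b := h
    apply Quotient.sound'
    rw [QuotientGroup.leftRel_apply]
    rw [Subgroup.mem_centralizer_iff]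
    intro s hs
    have := congrFun hab ⟨s, hs⟩
    have h2 : a * s * a⁻¹ = b * s * b⁻¹ := congrArg Subtype.val this
    calc s * (a⁻¹ * b) = a⁻¹ * (a * s * a⁻¹) * b := by group
      _ = a⁻¹ * (b * s * b⁻¹) * b := by rw [h2]
      _ = (a⁻¹ * b) * s := by group
  haveI hQfin : Finite (H ⧸ C) := Finite.of_injective ψ hψinj
  -- the transversal
  set W : Subgroup H := Subgroup.closure S with hW
  set ρ : H ⧸ C → H := fun q =>
    if q = QuotientGroup.mk (1 : H) then 1
    else if h : ∃ w, w ∈ W ∧ QuotientGroup.mk w = q then h.choose else 1 with hρ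
  have hρcl : ∀ q, ρ q ∈ W := by
    intro q
    rw [hρ]
    dsimp only
    split
    · exact W.one_mem
    · split
      · rename_i h
        exact h.choose_spec.1
      · exact W.one_mem
  have hρmk : ∀ x : H, x ∈ W → QuotientGroup.mk (ρ (QuotientGroup.mk x)) =
      (QuotientGroup.mk x : H ⧸ C) := by
    intro x hx
    rw [hρ]
    dsimp only
    split
    · rename_i h
      rw [h]
    · rename_i h
      have hex : ∃ w, w ∈ W ∧ QuotientGroup.mk w = (QuotientGroup.mk x : H ⧸ C) :=
        ⟨x, hx, rfl⟩
      rw [dif_pos hex]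
      exact hex.choose_spec.2
  set r : H → H := fun x => ρ (QuotientGroup.mk x) with hr
  have hrW : ∀ x, r x ∈ W := fun x => hρcl _
  have hrC : ∀ x ∈ W, (r x)⁻¹ * x ∈ C := by
    intro x hx
    have := hρmk x hx
    exact QuotientGroup.eq.1 this
  have hr1 : r 1 = 1 := by
    rw [hr]
    dsimp only
    rw [hρ]
    dsimp only
    rw [if_pos rfl]
  have hrmulC : ∀ x c : H, c ∈ C → r (x * c) = r x := by
    intro x c hc
    have : (QuotientGroup.mk (x * c) : H ⧸ C) = QuotientGroup.mk x := by
      rw [QuotientGroup.eq]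
      have : (x * c)⁻¹ * x = c⁻¹ * (x⁻¹ * x) := by group
      rw [this, inv_mul_cancel, mul_one]
      exact C.inv_mem hc
    rw [hr]
    dsimp only
    rw [this]
  set R : Set H := Set.range ρ with hR
  have hRfin : R.Finite := Set.finite_range ρ
  have hRW : R ⊆ (W : Set H) := by rintro x ⟨q, rfl⟩; exact hρcl q
  set U : Set H := (fun p : H × H => (r (p.1 * p.2))⁻¹ * (p.1 * p.2)) '' (R ×ˢ S) with hU
  have hUfin : U.Finite := (hRfin.prod hfin).image _
  have hUC : U ⊆ (C : Set H) := by
    rintro u ⟨⟨t, s⟩, ⟨ht, hs⟩, rfl⟩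
    exact hrC (t * s) (W.mul_mem (hRW ht) (Subgroup.subset_closure hs))
  have hUW : U ⊆ (W : Set H) := by
    rintro u ⟨⟨t, s⟩, ⟨ht, hs⟩, rfl⟩
    have h1 : t * s ∈ W := W.mul_mem (hRW ht) (Subgroup.subset_closure hs)
    exact W.mul_mem (W.inv_mem (hrW _)) h1
  -- commuting
  have comm_CW : ∀ c ∈ (C : Set H), ∀ w ∈ (W : Set H), Commute c w := by
    intro c hc w hw
    have hle : W ≤ Subgroup.centralizer {c} := by
      rw [hW, Subgroup.closure_le]
      intro s hs
      rw [SetLike.mem_coe, Subgroup.mem_centralizer_iff]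
      intro y hy
      rw [Set.mem_singleton_iff] at hy
      subst hy
      exact (Subgroup.mem_centralizer_iff.1 hc s hs).symm
    have := Subgroup.mem_centralizer_iff.1 (hle hw) c rfl
    exact this
  have hUcomm : ∀ u ∈ U, ∀ v ∈ U, Commute u v :=
    fun u hu v hv => comm_CW u (hUC hu) v (hUW hv)
  -- Schreier rewriting
  have schreier : ∀ N : ℕ, ∀ x ∈ S ^ N, (r x)⁻¹ * x ∈ U ^ N := by
    intro N
    induction N with
    | zero =>
        intro x hx
        rw [pow_zero, Set.mem_one] at hx
        subst hx
        rw [hr1, pow_zero, Set.mem_one]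
        group
    | succ n ih =>
        intro x hx
        rw [pow_succ] at hx
        obtain ⟨p, hp, s, hs, rfl⟩ := hx
        show (r (p * s))⁻¹ * (p * s) ∈ U ^ (n + 1)
        have hw := ih p hp
        set w : H := (r p)⁻¹ * p with hwdef
        have hpeq : p = r p * w := by rw [hwdef]; group
        have hwC : w ∈ (C : Set H) := pow_subset_subgroup hUC n hw
        have hwcomm : Commute w s := comm_CW w hwC s (Subgroup.subset_closure hs)
        set t : H := r p with ht
        set y : H := t * s with hy
        set v : H := (r y)⁻¹ * y with hv
        have hvU : v ∈ U := ⟨(t, s), ⟨⟨QuotientGroup.mk p, rfl⟩, hs⟩, rfl⟩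
        have hxy : p * s = y * w := by
          rw [hy, hpeq]
          calc (t * w) * s = t * (w * s) := by group
            _ = t * (s * w) := by rw [hwcomm.eq]
            _ = t * s * w := by group
        have hrxy : r (p * s) = r y := by
          rw [hxy]
          exact hrmulC y w hwC
        rw [hrxy, hxy]
        have : (r y)⁻¹ * (y * w) = v * w := by rw [hv]; group
        rw [this, pow_succ']
        exact ⟨v, hvU, w, hw, rfl⟩
  -- cover
  have hcover : ∀ N, S ^ N ⊆ R * U ^ N := by
    intro N x hx
    refine ⟨r x, ⟨QuotientGroup.mk x, rfl⟩, (r x)⁻¹ * x, schreier N x hx, by group⟩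
  -- counting
  refine ⟨max R.ncard 1, U.ncard, le_max_right _ _, fun N => ?_⟩
  have h1 : (S ^ N).ncard ≤ (R * U ^ N).ncard :=
    Set.ncard_le_ncard (hcover N) (hRfin.mul (pow_finite hUfin N))
  have h2 : (R * U ^ N).ncard ≤ R.ncard * (U ^ N).ncard := by
    rw [← Nat.card_coe_set_eq, ← Nat.card_coe_set_eq, ← Nat.card_coe_set_eq]
    exact Set.natCard_mul_le
  have h3 : (U ^ N).ncard ≤ (N + 1) ^ U.ncard := abelian_pow_ncard_le U hUfin hUcomm N
  calc (S ^ N).ncard ≤ R.ncard * (U ^ N).ncard := h1.trans h2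
    _ ≤ R.ncard * (N + 1) ^ U.ncard := Nat.mul_le_mul_left _ h3
    _ ≤ max R.ncard 1 * (N + 1) ^ U.ncard := Nat.mul_le_mul_right _ (le_max_left _ _)

lemma pow_subset_fcset {S : Set H} (hfc : S ⊆ FCset H) (N : ℕ) : S ^ N ⊆ FCset H := by
  induction N with
  | zero =>
      rintro x hx
      rw [pow_zero, Set.mem_one] at hx
      subst hx; exact fc_one
  | succ n ih =>
      rw [pow_succ]
      rintro x ⟨a, ha, b, hb, rfl⟩
      exact fc_mul (ih ha) (hfc hb)

lemma key (S : Set H) (hfin : S.Finite) (h1S : (1 : H) ∈ S)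
    (hsymm : ∀ x ∈ S, x⁻¹ ∈ S)
    (hconj : ∀ g x : H, x ∈ S → g * x * g⁻¹ ∈ S)
    (hfc : S ⊆ FCset H) {ε : ℝ} (hε : 0 < ε) :
    ∃ E : Set H, E.Finite ∧ E.Nonempty ∧ E ⊆ FCset H ∧
      (∀ g : H, (fun x => g * x * g⁻¹) '' E = E) ∧
      (∀ s ∈ S, ((symmDiff ((s * ·) '' E) E).ncard : ℝ) ≤ ε * (E.ncard : ℝ)) := by
  classical
  set b : ℕ → ℕ := fun N => (S ^ N).ncard with hb
  have hmonoset : ∀ N : ℕ, S ^ N ⊆ S ^ (N + 1) := by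
    intro N x hx
    rw [pow_succ]
    exact ⟨x, hx, 1, h1S, mul_one x⟩
  have hmono : Monotone b :=
    monotone_nat_of_le_succ fun N => Set.ncard_le_ncard (hmonoset N) (pow_finite hfin (N + 1))
  have hpos : ∀ N, 1 ≤ b N := by
    intro N
    have : 0 < b N := (Set.ncard_pos (pow_finite hfin N)).2 ⟨1, one_mem_pow h1S N⟩
    omega
  obtain ⟨c, D, _, hgrow⟩ := poly_growth S hfin hfc
  obtain ⟨N, hN1, hNle⟩ := exists_good_index b hmono hpos c D hgrow hε
  have hNeq : N - 1 + 1 = N := Nat.succ_pred_eq_of_pos hN1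
  refine ⟨S ^ N, pow_finite hfin N, ⟨1, one_mem_pow h1S N⟩, pow_subset_fcset hfc N, ?_, ?_⟩
  · -- conjugation invariance
    intro g
    have hSconj : (fun x => g * x * g⁻¹) '' S = S := by
      apply Set.Subset.antisymm
      · rintro x ⟨y, hy, rfl⟩
        exact hconj g y hy
      · intro x hx
        exact ⟨g⁻¹ * x * g, by simpa using hconj g⁻¹ x hx, by group⟩
    have hfunc : (fun x : H => g * x * g⁻¹) = ⇑(MulAut.conj g) := by
      funext x
      simp [MulAut.conj_apply]
    rw [hfunc] at hSconj ⊢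
    rw [Set.image_pow, hSconj]
  · -- translation almost-invariance
    intro s hs
    have hsub1 : (s * ·) '' (S ^ N) ⊆ S ^ (N + 1) := by
      rintro x ⟨y, hy, rfl⟩
      rw [pow_succ']
      exact ⟨s, hs, y, hy, rfl⟩
    have hsub2 : S ^ N ⊆ S ^ (N + 1) := hmonoset N
    have hsub3 : S ^ (N - 1) ⊆ S ^ N := by
      have := hmonoset (N - 1)
      rwa [hNeq] at this
    have hsub4 : S ^ (N - 1) ⊆ (s * ·) '' (S ^ N) := by
      intro x hx
      refine ⟨s⁻¹ * x, ?_, by group⟩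
      rw [← hNeq, pow_succ']
      exact ⟨s⁻¹, hsymm s hs, x, hx, rfl⟩
    have hdiffsub : symmDiff ((s * ·) '' (S ^ N)) (S ^ N) ⊆ S ^ (N + 1) \ S ^ (N - 1) := by
      rw [Set.symmDiff_def]
      apply Set.union_subset
      · rintro x ⟨hx1, hx2⟩
        exact ⟨hsub1 hx1, fun hmem => hx2 (hsub3 hmem)⟩
      · rintro x ⟨hx1, hx2⟩
        exact ⟨hsub2 hx1, fun hmem => hx2 (hsub4 hmem)⟩
    have hfinN1 : (S ^ (N + 1)).Finite := pow_finite hfin (N + 1)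
    have hcard : (symmDiff ((s * ·) '' (S ^ N)) (S ^ N)).ncard ≤ b (N + 1) - b (N - 1) := by
      have h1 := Set.ncard_le_ncard hdiffsub hfinN1.diff
      have h2 : (S ^ (N + 1) \ S ^ (N - 1)).ncard = b (N + 1) - b (N - 1) :=
        Set.ncard_diff (hsub3.trans hsub2) (pow_finite hfin (N - 1))
      omega
    have hble : b (N - 1) ≤ b (N + 1) := hmono (by omega)
    have hr1 : ((symmDiff ((s * ·) '' (S ^ N)) (S ^ N)).ncard : ℝ) ≤
        (b (N + 1) : ℝ) - (b (N - 1) : ℝ) := by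
      have := Nat.cast_le (α := ℝ).2 hcard
      rwa [Nat.cast_sub hble] at this
    have hr3 : ε * (b (N - 1) : ℝ) ≤ ε * (b N : ℝ) :=
      mul_le_mul_of_nonneg_left (Nat.cast_le.2 (hmono (by omega))) hε.le
    have : ((S ^ N).ncard : ℝ) = (b N : ℝ) := rfl
    rw [this]
    linarith

/-- conjugacy class -/
def conjCl (h : H) : Set H := Set.range fun g : H => g * h * g⁻¹

lemma self_mem_conjCl (h : H) : h ∈ conjCl h := ⟨1, by group⟩

lemma conjCl_finite {h : H} (hh : h ∈ FCset H) : (conjCl h).Finite := hh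

lemma inv_mem_conjCl_inv {x h : H} (hx : x ∈ conjCl h) : x⁻¹ ∈ conjCl h⁻¹ := by
  obtain ⟨g, rfl⟩ := hx
  exact ⟨g, by group⟩

lemma conj_mem_conjCl {x h : H} (g : H) (hx : x ∈ conjCl h) : g * x * g⁻¹ ∈ conjCl h := by
  obtain ⟨k, rfl⟩ := hx
  exact ⟨g * k, by group⟩

lemma conjCl_subset_fcset {h : H} (hh : h ∈ FCset H) : conjCl h ⊆ FCset H := by
  rintro x ⟨g, rfl⟩
  exact fc_conj g hh


end Stmt11Aux

open Stmt11Aux in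
theorem stmt11 {H : Type*} [Group H] [Countable H] :
    ∃ E : ℕ → Set H,
      (∀ n, E n ⊆ {h : H | (Set.range fun g : H => g * h * g⁻¹).Finite} ∧
        (E n).Finite ∧ (E n).Nonempty) ∧
      (∀ g : H, Tendsto
        (fun n => ((symmDiff ((fun x => g * x * g⁻¹) '' E n) (E n)).ncard : ℝ) /
          ((E n).ncard : ℝ)) atTop (nhds 0)) ∧
      (∀ h : H, (Set.range fun g : H => g * h * g⁻¹).Finite →
        Tendsto
          (fun n => ((symmDiff ((h * ·) '' E n) (E n)).ncard : ℝ) /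
            ((E n).ncard : ℝ)) atTop (nhds 0)) := by
  classical
  haveI : Nonempty H := ⟨1⟩
  obtain ⟨e, he⟩ := exists_surjective_nat H
  set S : ℕ → Set H := fun n => {1} ∪ ⋃ i ∈ Finset.range (n + 1),
      (if e i ∈ FCset H then conjCl (e i) ∪ conjCl ((e i)⁻¹) else ∅) with hS
  have hSfin : ∀ n, (S n).Finite := by
    intro n
    apply (Set.finite_singleton 1).union
    apply Set.Finite.biUnion (Finset.range (n + 1)).finite_toSet
    intro i _
    split
    · rename_i hfc
      exact (conjCl_finite hfc).union (conjCl_finite (fc_inv hfc))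
    · exact Set.finite_empty
  have hS1 : ∀ n, (1 : H) ∈ S n := fun n => Or.inl rfl
  have hSsymm : ∀ n, ∀ x ∈ S n, x⁻¹ ∈ S n := by
    intro n x hx
    rcases hx with hx | hx
    · rw [Set.mem_singleton_iff] at hx
      subst hx
      exact Or.inl (by simp)
    · rw [Set.mem_iUnion₂] at hx
      obtain ⟨i, hi, hxi⟩ := hx
      right
      rw [Set.mem_iUnion₂]
      refine ⟨i, hi, ?_⟩
      by_cases hfc : e i ∈ FCset H
      · rw [if_pos hfc] at hxi ⊢
        rcases hxi with hxi | hxi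
        · exact Or.inr (inv_mem_conjCl_inv hxi)
        · left
          have := inv_mem_conjCl_inv hxi
          rwa [inv_inv] at this
      · rw [if_neg hfc] at hxi
        exact absurd hxi (Set.notMem_empty x)
  have hSconj : ∀ n, ∀ g x : H, x ∈ S n → g * x * g⁻¹ ∈ S n := by
    intro n g x hx
    rcases hx with hx | hx
    · rw [Set.mem_singleton_iff] at hx
      subst hx
      exact Or.inl (by simp)
    · rw [Set.mem_iUnion₂] at hx
      obtain ⟨i, hi, hxi⟩ := hx
      right
      rw [Set.mem_iUnion₂]
      refine ⟨i, hi, ?_⟩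
      by_cases hfc : e i ∈ FCset H
      · rw [if_pos hfc] at hxi ⊢
        rcases hxi with hxi | hxi
        · exact Or.inl (conj_mem_conjCl g hxi)
        · exact Or.inr (conj_mem_conjCl g hxi)
      · rw [if_neg hfc] at hxi
        exact absurd hxi (Set.notMem_empty x)
  have hSfc : ∀ n, S n ⊆ FCset H := by
    intro n x hx
    rcases hx with hx | hx
    · rw [Set.mem_singleton_iff] at hx
      subst hx
      exact fc_one
    · rw [Set.mem_iUnion₂] at hx
      obtain ⟨i, hi, hxi⟩ := hx
      by_cases hfc : e i ∈ FCset H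
      · rw [if_pos hfc] at hxi
        rcases hxi with hxi | hxi
        · exact conjCl_subset_fcset hfc hxi
        · exact conjCl_subset_fcset (fc_inv hfc) hxi
      · rw [if_neg hfc] at hxi
        exact absurd hxi (Set.notMem_empty x)
  have hεpos : ∀ n : ℕ, (0 : ℝ) < 1 / ((n : ℝ) + 1) := by
    intro n; positivity
  choose E hEfin hEne hEfc hEconj hEbound using
    fun n => key (S n) (hSfin n) (hS1 n) (hSsymm n) (hSconj n) (hSfc n) (hεpos n)
  refine ⟨E, fun n => ⟨hEfc n, hEfin n, hEne n⟩, ?_, ?_⟩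
  · -- conjugation: sequence is identically zero
    intro g
    have h0 : (fun n => ((symmDiff ((fun x => g * x * g⁻¹) '' E n) (E n)).ncard : ℝ) /
        ((E n).ncard : ℝ)) = fun _ => (0 : ℝ) := by
      funext n
      rw [hEconj n g, symmDiff_self]
      simp
    rw [h0]
    exact tendsto_const_nhds
  · -- translations
    intro h hfch
    obtain ⟨m, hm⟩ := he h
    have hEpos : ∀ n, (0 : ℝ) < ((E n).ncard : ℝ) := by
      intro n
      exact_mod_cast (Set.ncard_pos (hEfin n)).2 (hEne n)
    apply tendsto_of_tendsto_of_tendsto_of_le_of_le' tendsto_const_nhds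
      tendsto_one_div_add_atTop_nhds_zero_nat
    · exact Eventually.of_forall fun n => by positivity
    · rw [eventually_atTop]
      refine ⟨m, fun n hn => ?_⟩
      have hhS : h ∈ S n := by
        right
        rw [Set.mem_iUnion₂]
        refine ⟨m, Finset.mem_range.2 (by omega), ?_⟩
        have hfcm : e m ∈ FCset H := by rw [hm]; exact hfch
        rw [if_pos hfcm]
        left
        rw [← hm]
        exact self_mem_conjCl (e m)
      have hbd := hEbound n h hhS
      rw [div_le_iff₀ (hEpos n)]
      linarith [hbd]
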